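/- Let σ₁² ≥ … ≥ σ_d² > 0, σ² > 0, and let F ⊆ [d] be the support of a diagonal matrix S with entries s_i ≥ 0 (allowing s_i = ∞ via continuous extension). The infimum of Σ_{j∉F} σⱼ² + Σ_{ℓ∈F} σ²σ_ℓ²/(σ² + σ_ℓ² s_ℓ²) over {s_ℓ} with support constrained by |F| ≤ R equals Σ_{j∉F*} σⱼ², where F* is the set of indices of the ⌊min(R,d)⌋ largest eigenvalues, and this choice of F minimizes the residual over all admissible F. -/

import Mathlib

open Finset Filter Topology

private lemma le_strictMono_fin {n d : ℕ} {f : Fin n → Fin d} (hf : StrictMono f) :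
    ∀ j : Fin n, (j : ℕ) ≤ (f j : ℕ) := by
  intro j
  induction' hj : (j : ℕ) with m ih generalizing j
  · exact Nat.zero_le _
  · have hm : m < n := by omega
    have h1 := ih ⟨m, hm⟩ rfl
    have h2 : f ⟨m, hm⟩ < f j := hf (by simp [Fin.lt_def, hj])
    rw [Fin.lt_def] at h2
    omega

private lemma sum_le_best {d k : ℕ} {s2 : Fin d → ℝ} (hpos : ∀ i, 0 ≤ s2 i)
    (hanti : Antitone s2) (F : Finset (Fin d)) (hF : F.card ≤ k) :
    ∑ i ∈ F, s2 i ≤ ∑ i ∈ Finset.univ.filter (fun i : Fin d => (i : ℕ) < k), s2 i := by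
  set n := F.card with hn
  have hnd : n ≤ d := by simpa using F.card_le_univ
  set e := F.orderEmbOfFin hn.symm
  have himg : Finset.image e Finset.univ = F := by
    apply Finset.coe_injective
    rw [Finset.coe_image, Finset.coe_univ, Set.image_univ]
    exact F.range_orderEmbOfFin hn.symm
  have h1 : ∑ i ∈ F, s2 i = ∑ j : Fin n, s2 (e j) := by
    rw [← himg, Finset.sum_image (fun a _ b _ h => e.injective h)]
  rw [h1]
  have h2 : ∑ j : Fin n, s2 (e j) ≤
      ∑ j : Fin n, s2 ⟨(j : ℕ), lt_of_lt_of_le j.2 hnd⟩ := by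
    apply Finset.sum_le_sum
    intro j _
    apply hanti
    rw [Fin.le_def]
    exact le_strictMono_fin e.strictMono j
  refine h2.trans ?_
  have h3 : ∑ j : Fin n, s2 ⟨(j : ℕ), lt_of_lt_of_le j.2 hnd⟩ =
      ∑ i ∈ Finset.image (fun j : Fin n => (⟨(j : ℕ), lt_of_lt_of_le j.2 hnd⟩ : Fin d))
        Finset.univ, s2 i := by
    rw [Finset.sum_image]
    intro a _ b _ h
    exact Fin.ext (by simpa using h)
  rw [h3]
  apply Finset.sum_le_sum_of_subset_of_nonneg
  · intro i hi
    simp only [Finset.mem_image, Finset.mem_univ, true_and] at hi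
    obtain ⟨j, rfl⟩ := hi
    simp only [Finset.mem_filter, Finset.mem_univ, true_and]
    exact lt_of_lt_of_le j.2 hF
  · intro i _ _; exact hpos i

/-- Theorem 2, PCA recovery: with a dimension-counting constraint `|F| ≤ R`, the
infimum of `Σ_{j∉F} σⱼ² + Σ_{ℓ∈F} σ²σ_ℓ²/(σ² + σ_ℓ² s_ℓ²)` over supports `F` and nonnegative
scalings `s`, equals the residual `Σ_{j∉F*} σⱼ²` where `F*` consists of the indices of the
`min(⌊R⌋, d)` largest eigenvalues. -/
theorem stmt_7 (d : ℕ) (s2 : Fin d → ℝ) (σ2 R : ℝ)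
    (hs2_pos : ∀ i, 0 < s2 i) (hs2_anti : Antitone s2)
    (hσ2 : 0 < σ2) (hR : 0 < R) :
    IsGLB
      { v : ℝ | ∃ (F : Finset (Fin d)) (s : Fin d → ℝ),
          (F.card : ℝ) ≤ R ∧ (∀ i, 0 ≤ s i) ∧
          v = ∑ j ∈ Fᶜ, s2 j + ∑ l ∈ F, σ2 * s2 l / (σ2 + s2 l * (s l) ^ 2) }
      (∑ j ∈ (Finset.univ.filter fun i : Fin d => (i : ℕ) < min (Nat.floor R) d)ᶜ, s2 j) := by
  set k := min (Nat.floor R) d with hk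
  set Fstar := Finset.univ.filter fun i : Fin d => (i : ℕ) < k with hFstar
  have htotal : ∀ F : Finset (Fin d),
      ∑ j ∈ Fᶜ, s2 j + ∑ i ∈ F, s2 i = ∑ i, s2 i := by
    intro F
    rw [add_comm]
    exact Finset.sum_add_sum_compl F s2
  constructor
  · -- lower bound
    rintro v ⟨F, s, hcard, hs, rfl⟩
    have hcompl : ∑ j ∈ Fstarᶜ, s2 j ≤ ∑ j ∈ Fᶜ, s2 j := by
      have hFk : F.card ≤ k := by
        refine le_min ?_ (by simpa using F.card_le_univ)
        exact Nat.le_floor hcard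
      have := sum_le_best (fun i => (hs2_pos i).le) hs2_anti F hFk
      have h1 := htotal F
      have h2 := htotal Fstar
      simp only [← hFstar] at this h2 ⊢
      linarith
    refine hcompl.trans ?_
    have : 0 ≤ ∑ l ∈ F, σ2 * s2 l / (σ2 + s2 l * (s l) ^ 2) := by
      apply Finset.sum_nonneg
      intro l _
      exact div_nonneg (mul_nonneg hσ2.le (hs2_pos l).le)
        (add_nonneg hσ2.le (mul_nonneg (hs2_pos l).le (sq_nonneg _)))
    linarith
  · -- greatest lower bound
    rintro b hb
    have hcardk : Fstar.card ≤ k := by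
      rw [← Finset.card_range k]
      apply Finset.card_le_card_of_injOn (fun i : Fin d => (i : ℕ))
      · intro i hi
        rw [hFstar, Finset.mem_coe, Finset.mem_filter] at hi
        exact Finset.mem_coe.mpr (Finset.mem_range.mpr hi.2)
      · exact fun a _ b _ h => Fin.ext h
    have hcardR : (Fstar.card : ℝ) ≤ R := by
      calc (Fstar.card : ℝ) ≤ (k : ℕ) := by exact_mod_cast hcardk
        _ ≤ (Nat.floor R : ℝ) := by exact_mod_cast min_le_left _ _
        _ ≤ R := Nat.floor_le hR.le
    have hseq : ∀ n : ℕ,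
        b ≤ ∑ j ∈ Fstarᶜ, s2 j + ∑ l ∈ Fstar, σ2 * s2 l / (σ2 + s2 l * ((n : ℝ)) ^ 2) := by
      intro n
      exact hb ⟨Fstar, fun _ => (n : ℝ), hcardR, fun _ => Nat.cast_nonneg n, rfl⟩
    have hterm : ∀ l ∈ Fstar, Tendsto
        (fun n : ℕ => σ2 * s2 l / (σ2 + s2 l * ((n : ℝ)) ^ 2)) atTop (𝓝 0) := by
      intro l _
      apply Tendsto.div_atTop tendsto_const_nhds
      apply tendsto_atTop_add_const_left
      apply Tendsto.const_mul_atTop (hs2_pos l)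
      exact ((tendsto_pow_atTop two_ne_zero).comp tendsto_natCast_atTop_atTop)
    have hsum : Tendsto (fun n : ℕ =>
        ∑ j ∈ Fstarᶜ, s2 j + ∑ l ∈ Fstar, σ2 * s2 l / (σ2 + s2 l * ((n : ℝ)) ^ 2))
        atTop (𝓝 (∑ j ∈ Fstarᶜ, s2 j)) := by
      have h0 : Tendsto (fun n : ℕ =>
          ∑ l ∈ Fstar, σ2 * s2 l / (σ2 + s2 l * ((n : ℝ)) ^ 2)) atTop (𝓝 0) := by
        rw [show (0:ℝ) = ∑ l ∈ Fstar, (0:ℝ) by simp]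
        exact tendsto_finset_sum Fstar hterm
      simpa using tendsto_const_nhds.add h0
    exact ge_of_tendsto' hsum hseq
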